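/- There is a constant C > 0 such that for every f ∈ L¹(ℝ) and every α > 0, λ{x ∈ ℝ : P*f(x) > α} ≤ (C/α) ‖f‖₁, where P*f(x) = sup_{y > 0} ∫_ℝ P_y(x−t)|f(t)| dt. -/

import Mathlib

open Real MeasureTheory
open scoped ENNReal NNReal

noncomputable def realPoissonKernel (y x : ℝ) : ℝ := (1 / π) * (y / (x ^ 2 + y ^ 2))

lemma realPoissonKernel_nonneg {y : ℝ} (hy : 0 ≤ y) (u : ℝ) : 0 ≤ realPoissonKernel y u := by
  unfold realPoissonKernel
  have : (0:ℝ) ≤ 1 / π := by positivity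
  exact mul_nonneg this (div_nonneg hy (by positivity))

/-- Key pointwise lemma: if all ball-averages of `g` around `x` are controlled by `β`,
then the Poisson integral of `g` at `(x, y)` is at most `6β/π`. -/
lemma poisson_le_maximal (g : ℝ → ℝ≥0∞) (hg : AEMeasurable g volume)
    (x y β : ℝ) (hy : 0 < y) (hβ : 0 ≤ β)
    (hball : ∀ r : ℝ, 0 < r →
      ∫⁻ t in Metric.closedBall x r, g t ≤ ENNReal.ofReal β * ENNReal.ofReal r) :
    ∫⁻ t, ENNReal.ofReal (realPoissonKernel y (x - t)) * g t ≤ ENNReal.ofReal (6 * β / π) := by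
  classical
  have hπ : (0:ℝ) < π := Real.pi_pos
  -- the dyadic coefficients and radii
  set a : ℕ → ℝ := fun k => 3 / (2 * π * 4 ^ k * y) with ha
  set rr : ℕ → ℝ := fun k => 2 ^ (k + 1) * y with hrr
  have hank : ∀ k, 0 ≤ a k := fun k => by
    simp only [ha]; positivity
  have hrrpos : ∀ k, 0 < rr k := fun k => by
    simp only [hrr]; positivity
  -- pointwise domination of the Poisson kernel by a sum of indicators
  have hpt : ∀ t : ℝ, ENNReal.ofReal (realPoissonKernel y (x - t)) ≤
      ∑' k : ℕ, (Metric.closedBall x (rr k)).indicator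
        (fun _ => ENNReal.ofReal (a k)) t := by
    intro t
    have hex : ∃ k : ℕ, |x - t| ≤ 2 ^ (k + 1) * y := by
      obtain ⟨k, hk⟩ := pow_unbounded_of_one_lt (|x - t| / y) (one_lt_two (α := ℝ))
      refine ⟨k, ?_⟩
      have h1 : |x - t| < 2 ^ k * y := by
        rw [div_lt_iff₀ hy] at hk; linarith
      have h2 : (2:ℝ) ^ k * y ≤ 2 ^ (k + 1) * y := by
        have : (2:ℝ) ^ k ≤ 2 ^ (k + 1) := pow_le_pow_right₀ one_le_two (Nat.le_succ k)
        nlinarith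
      linarith
    obtain ⟨k₀, hk₀, hminall⟩ : ∃ k : ℕ, |x - t| ≤ 2 ^ (k + 1) * y ∧
        ∀ m < k, ¬(|x - t| ≤ 2 ^ (m + 1) * y) :=
      ⟨Nat.find hex, Nat.find_spec hex, fun m hm => Nat.find_min hex hm⟩
    have hmem : t ∈ Metric.closedBall x (rr k₀) := by
      rw [Metric.mem_closedBall, Real.dist_eq, abs_sub_comm]
      exact hk₀
    have hbound : realPoissonKernel y (x - t) ≤ a k₀ := by
      set u := x - t
      have hden : 0 < u ^ 2 + y ^ 2 := by positivity
      have key : y / (u ^ 2 + y ^ 2) ≤ 3 / (2 * 4 ^ k₀ * y) := by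
        rw [div_le_div_iff₀ hden (by positivity)]
        rcases Nat.eq_zero_or_pos k₀ with h0 | hpos
        · subst h0; simp only [pow_zero]; nlinarith [sq_nonneg u]
        · obtain ⟨m, rfl⟩ := Nat.exists_eq_succ_of_ne_zero hpos.ne'
          have hmin : ¬ (|u| ≤ 2 ^ (m + 1) * y) := hminall m (Nat.lt_succ_self m)
          push_neg at hmin
          have h2 : (2:ℝ) ^ (m + 1) * y ≤ |u| := hmin.le
          have h3 : ((2:ℝ) ^ (m + 1) * y) ^ 2 ≤ |u| ^ 2 := by
            have := mul_nonneg (pow_nonneg (by norm_num : (0:ℝ) ≤ 2) (m+1)) hy.le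
            nlinarith
          have h4 : ((2:ℝ) ^ (m + 1)) ^ 2 = 4 ^ (m + 1) := by
            rw [← pow_mul, mul_comm, pow_mul]; norm_num
          have h5 : (4:ℝ) ^ (m + 1) * y ^ 2 ≤ u ^ 2 := by
            rw [sq_abs] at h3; nlinarith [h3]
          have h6 : (0:ℝ) < 4 ^ (m + 1) := by positivity
          show y * (2 * 4 ^ (m + 1) * y) ≤ 3 * (u ^ 2 + y ^ 2)
          nlinarith [sq_nonneg y, sq_nonneg u]
      have hrw : a k₀ = (1 / π) * (3 / (2 * 4 ^ k₀ * y)) := by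
        simp only [ha]; field_simp
      rw [hrw]; unfold realPoissonKernel
      exact mul_le_mul_of_nonneg_left key (by positivity)
    calc ENNReal.ofReal (realPoissonKernel y (x - t)) ≤ ENNReal.ofReal (a k₀) :=
          ENNReal.ofReal_le_ofReal hbound
      _ = (Metric.closedBall x (rr k₀)).indicator (fun _ => ENNReal.ofReal (a k₀)) t :=
          (Set.indicator_of_mem hmem fun _ => ENNReal.ofReal (a k₀)).symm
      _ ≤ _ := ENNReal.le_tsum k₀
  -- integrate the pointwise bound
  calc ∫⁻ t, ENNReal.ofReal (realPoissonKernel y (x - t)) * g t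
      ≤ ∫⁻ t, ∑' k : ℕ, (Metric.closedBall x (rr k)).indicator
          (fun _ => ENNReal.ofReal (a k)) t * g t := by
        refine lintegral_mono fun t => ?_
        rw [ENNReal.tsum_mul_right]
        exact mul_le_mul_left (hpt t) _
    _ = ∑' k : ℕ, ∫⁻ t, (Metric.closedBall x (rr k)).indicator
          (fun _ => ENNReal.ofReal (a k)) t * g t :=
        lintegral_tsum fun k =>
          ((measurable_const.indicator measurableSet_closedBall).aemeasurable.mul hg)
    _ ≤ ∑' k : ℕ, ENNReal.ofReal (6 * β / π) * ENNReal.ofReal ((1/2 : ℝ) ^ (k + 1)) := by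
        refine ENNReal.tsum_le_tsum fun k => ?_
        have hind : ∀ t, (Metric.closedBall x (rr k)).indicator
            (fun _ => ENNReal.ofReal (a k)) t * g t =
            (Metric.closedBall x (rr k)).indicator
            (fun s => ENNReal.ofReal (a k) * g s) t := by
          intro t; by_cases h : t ∈ Metric.closedBall x (rr k) <;> simp [h]
        rw [lintegral_congr hind,
          lintegral_indicator measurableSet_closedBall,
          lintegral_const_mul' _ _ ENNReal.ofReal_ne_top]
        calc ENNReal.ofReal (a k) * ∫⁻ t in Metric.closedBall x (rr k), g t
            ≤ ENNReal.ofReal (a k) * (ENNReal.ofReal β * ENNReal.ofReal (rr k)) :=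
              mul_le_mul_right (hball (rr k) (hrrpos k)) _
          _ = ENNReal.ofReal (a k * (β * rr k)) := by
              rw [← ENNReal.ofReal_mul hβ, ← ENNReal.ofReal_mul (hank k)]
          _ = ENNReal.ofReal (6 * β / π) * ENNReal.ofReal ((1/2 : ℝ) ^ (k + 1)) := by
              rw [← ENNReal.ofReal_mul (by positivity)]
              congr 1
              have h4 : (4:ℝ) ^ k = 2 ^ k * 2 ^ k := by
                rw [← mul_pow]; norm_num
              simp only [ha, hrr, h4]
              have h2k : (0:ℝ) < 2 ^ k := by positivity
              field_simp
              have h2 : (1/2:ℝ)^(k+1) * 2^(k+1) = 1 := by rw [← mul_pow]; norm_num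
              linear_combination (-6 * β * 2 ^ k) * h2
    _ = ENNReal.ofReal (6 * β / π) * ∑' k : ℕ, ENNReal.ofReal ((1/2 : ℝ) ^ (k + 1)) :=
        ENNReal.tsum_mul_left
    _ ≤ ENNReal.ofReal (6 * β / π) * 1 := by
        refine mul_le_mul_right (le_of_eq ?_) _
        have : ∑' k : ℕ, ENNReal.ofReal ((1/2 : ℝ) ^ (k + 1)) =
            ENNReal.ofReal (∑' k : ℕ, (1/2 : ℝ) ^ (k + 1)) := by
          rw [ENNReal.ofReal_tsum_of_nonneg (fun k => by positivity)]
          exact (summable_geometric_of_lt_one (by norm_num) (by norm_num)).comp_injective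
            (add_left_injective 1)
        rw [this]
        have hs : ∑' k : ℕ, (1/2 : ℝ) ^ (k + 1) = 1 := by
          have h := tsum_geometric_of_lt_one (by norm_num : (0:ℝ) ≤ 1/2) (by norm_num)
          calc ∑' k : ℕ, (1/2 : ℝ) ^ (k + 1) = ∑' k : ℕ, (1/2 : ℝ) * (1/2) ^ k := by
                congr 1; funext k; rw [pow_succ']
            _ = (1/2 : ℝ) * ∑' k : ℕ, (1/2 : ℝ) ^ k := tsum_mul_left
            _ = 1 := by rw [h]; norm_num
        rw [hs, ENNReal.ofReal_one]
    _ = ENNReal.ofReal (6 * β / π) := mul_one _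

theorem poisson_maximal_theorem :
    ∃ C : ℝ, 0 < C ∧ ∀ f : ℝ → ℝ, Integrable f → ∀ α : ℝ, 0 < α →
      volume {x : ℝ | ∃ y : ℝ, 0 < y ∧ α < ∫ t : ℝ, realPoissonKernel y (x - t) * |f t|}
        ≤ ENNReal.ofReal ((C / α) * ∫ t : ℝ, |f t|) := by
  classical
  refine ⟨16, by norm_num, fun f hf α hα => ?_⟩
  have hπ : (0:ℝ) < π := Real.pi_pos
  set G : ℝ → ℝ≥0∞ := fun t => ENNReal.ofReal |f t| with hGdef
  have hGm : AEMeasurable G volume := hf.abs.1.aemeasurable.ennreal_ofReal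
  set I : ℝ := ∫ t, |f t| with hIdef
  have hI0 : 0 ≤ I := integral_nonneg fun t => abs_nonneg _
  have hGint : ∫⁻ t, G t = ENNReal.ofReal I :=
    (ofReal_integral_eq_lintegral_ofReal hf.abs (ae_of_all _ fun t => abs_nonneg _)).symm
  set E := {x : ℝ | ∃ y : ℝ, 0 < y ∧ α < ∫ t : ℝ, realPoissonKernel y (x - t) * |f t|} with hE
  set R : ℝ := 6 * I / (π * α) with hR
  -- Step 1: every point of E is the center of a good ball
  have key : ∀ x ∈ E, ∃ r : ℝ, 0 < r ∧ r ≤ R ∧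
      ENNReal.ofReal (π * α / 6) * ENNReal.ofReal r <
        ∫⁻ t in Metric.closedBall x r, G t := by
    rintro x ⟨y, hy, hxy⟩
    have hPnn : ∀ u : ℝ, 0 ≤ realPoissonKernel y u := realPoissonKernel_nonneg hy.le
    have hcden : ∀ t : ℝ, (x - t) ^ 2 + y ^ 2 ≠ 0 := fun t =>
      (add_pos_of_nonneg_of_pos (sq_nonneg _) (pow_pos hy 2)).ne'
    have hc : Continuous fun t : ℝ => realPoissonKernel y (x - t) := by
      unfold realPoissonKernel
      exact continuous_const.mul (continuous_const.div
        ((((continuous_const.sub continuous_id).pow 2).add continuous_const)) hcden)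
    have hmeas : AEStronglyMeasurable (fun t => realPoissonKernel y (x - t) * |f t|) volume :=
      hc.aestronglyMeasurable.mul hf.abs.1
    set L : ℝ≥0∞ := ∫⁻ t, ENNReal.ofReal (realPoissonKernel y (x - t)) * G t with hLdef
    have heq : ∫ t, realPoissonKernel y (x - t) * |f t| = L.toReal := by
      rw [integral_eq_lintegral_of_nonneg_ae (ae_of_all _ fun t =>
        mul_nonneg (hPnn _) (abs_nonneg _)) hmeas]
      congr 1
      exact lintegral_congr fun t => ENNReal.ofReal_mul (hPnn _)
    have hlt : ENNReal.ofReal α < L := by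
      rcases eq_or_ne L ⊤ with h | h
      · rw [h]; exact ENNReal.ofReal_lt_top
      · rw [ENNReal.ofReal_lt_iff_lt_toReal hα.le h, ← heq]; exact hxy
    have key1 : ∃ r : ℝ, 0 < r ∧
        ENNReal.ofReal (π * α / 6) * ENNReal.ofReal r <
          ∫⁻ t in Metric.closedBall x r, G t := by
      by_contra hcon
      push_neg at hcon
      have hβ : (0:ℝ) ≤ π * α / 6 := by positivity
      have := poisson_le_maximal G hGm x y (π * α / 6) hy hβ fun r hr => hcon r hr
      have h6 : 6 * (π * α / 6) / π = α := by field_simp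
      rw [h6] at this
      exact absurd hlt (not_lt.2 this)
    obtain ⟨r, hr, hthr⟩ := key1
    refine ⟨r, hr, ?_, hthr⟩
    -- the radius is bounded by R
    have hle : ENNReal.ofReal (π * α / 6 * r) < ENNReal.ofReal I := by
      rw [ENNReal.ofReal_mul (by positivity)]
      calc ENNReal.ofReal (π * α / 6) * ENNReal.ofReal r
          < ∫⁻ t in Metric.closedBall x r, G t := hthr
        _ ≤ ∫⁻ t, G t := setLIntegral_le_lintegral _ _
        _ = ENNReal.ofReal I := hGint
    have h1 : π * α / 6 * r < I :=
      (ENNReal.ofReal_lt_ofReal_iff_of_nonneg (by positivity)).1 hle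
    rw [hR, le_div_iff₀ (by positivity)]
    nlinarith
  -- Step 2: Vitali covering argument
  choose! ρ hρpos hρle hρball using key
  obtain ⟨u, huE, hdisj, hcover⟩ :=
    Vitali.exists_disjoint_subfamily_covering_enlargement_closedBall E id ρ R
      (fun a ha => hρle a ha) 4 (by norm_num)
  have hcov : E ⊆ ⋃ b ∈ u, Metric.closedBall b (4 * ρ b) := by
    intro a ha
    obtain ⟨b, hb, hsub⟩ := hcover a ha
    exact Set.mem_biUnion hb (hsub (Metric.mem_closedBall_self (hρpos a ha).le))
  have hucount : u.Countable := by
    refine hdisj.countable_of_nonempty_interior fun b hb => ?_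
    have hbpos : 0 < ρ b := hρpos b (huE hb)
    exact ⟨b, Metric.ball_subset_interior_closedBall (Metric.mem_ball_self hbpos)⟩
  set μ := volume.withDensity G with hμdef
  have hμball : ∀ b : ℝ, μ (Metric.closedBall b (ρ b)) =
      ∫⁻ t in Metric.closedBall b (ρ b), G t := fun b =>
    withDensity_apply G measurableSet_closedBall
  calc volume E ≤ volume (⋃ b ∈ u, Metric.closedBall b (4 * ρ b)) := measure_mono hcov
    _ ≤ ∑' b : u, volume (Metric.closedBall (b : ℝ) (4 * ρ (b : ℝ))) :=
        measure_biUnion_le volume hucount _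
    _ ≤ ∑' b : u, ENNReal.ofReal (48 / (π * α)) * μ (Metric.closedBall (b : ℝ) (ρ (b : ℝ))) := by
        refine ENNReal.tsum_le_tsum fun b => ?_
        have hbE : (b : ℝ) ∈ E := huE b.2
        have hbpos : 0 < ρ b := hρpos b hbE
        rw [Real.volume_closedBall, hμball]
        calc ENNReal.ofReal (2 * (4 * ρ (b:ℝ)))
            = ENNReal.ofReal (48 / (π * α)) * ENNReal.ofReal (π * α / 6 * ρ (b:ℝ)) := by
              rw [← ENNReal.ofReal_mul (by positivity)]
              congr 1
              field_simp
              ring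
          _ = ENNReal.ofReal (48 / (π * α)) *
              (ENNReal.ofReal (π * α / 6) * ENNReal.ofReal (ρ (b:ℝ))) := by
              rw [ENNReal.ofReal_mul (by positivity)]
          _ ≤ ENNReal.ofReal (48 / (π * α)) *
              ∫⁻ t in Metric.closedBall (b:ℝ) (ρ (b:ℝ)), G t :=
              mul_le_mul_right (hρball b hbE).le _
    _ = ENNReal.ofReal (48 / (π * α)) * ∑' b : u, μ (Metric.closedBall (b : ℝ) (ρ (b : ℝ))) :=
        ENNReal.tsum_mul_left
    _ ≤ ENNReal.ofReal (48 / (π * α)) * μ Set.univ := by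
        refine mul_le_mul_right ?_ _
        refine tsum_measure_le_measure_univ
          (fun b => measurableSet_closedBall.nullMeasurableSet) ?_
        intro b c hbc
        exact (hdisj b.2 c.2 (Subtype.coe_injective.ne hbc)).aedisjoint
    _ = ENNReal.ofReal (48 / (π * α)) * ENNReal.ofReal I := by
        rw [hμdef, withDensity_apply G MeasurableSet.univ, Measure.restrict_univ, hGint]
    _ ≤ ENNReal.ofReal ((16 / α) * I) := by
        rw [← ENNReal.ofReal_mul (by positivity)]
        refine ENNReal.ofReal_le_ofReal ?_
        have hπ3 : (3:ℝ) < π := Real.pi_gt_three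
        have : 48 / (π * α) ≤ 16 / α := by
          rw [div_le_div_iff₀ (by positivity) hα]
          nlinarith
        exact mul_le_mul_of_nonneg_right this hI0
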